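/- The BiSample-MD mechanism satisfies ε-local differential privacy on the extended input domain [−1,1] ∪ {⊥}: for any two inputs t1, t2 (including ⊥) and any output (s,b), Pr[M(t1)=(s,b)] ≤ e^ε · Pr[M(t2)=(s,b)]. -/

import Mathlib

open Real

/-- Output distribution of BiSample-MD on the extended input domain
`[−1,1] ∪ {⊥}` (modeled by `Option ℝ`, `none = ⊥`): choose `s` uniformly;
for a real input `v`, `b = 1` w.p. `((1−e^ε)/(1+e^ε))·(v/2)+1/2` if `s = 0`
and w.p. `((e^ε−1)/(e^ε+1))·(v/2)+1/2` if `s = 1`; for input `⊥`, `b = 1`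
w.p. `1/(e^ε+1)` regardless of `s`. -/
noncomputable def biSampleMDProb (ε : ℝ) (t : Option ℝ) : Bool × Bool → ℝ
  | (s, b) =>
    let g := match t with
      | some v => if s then (exp ε - 1) / (exp ε + 1) * (v / 2) + 1 / 2
                  else (1 - exp ε) / (1 + exp ε) * (v / 2) + 1 / 2
      | none => 1 / (exp ε + 1)
    1 / 2 * (if b then g else 1 - g)

lemma biSampleMD_bounds (ε : ℝ) (hε : 0 < ε) (t : Option ℝ)
    (ht : ∀ v ∈ t, v ∈ Set.Icc (-1 : ℝ) 1) (o : Bool × Bool) :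
    1 / (2 * (exp ε + 1)) ≤ biSampleMDProb ε t o ∧
      biSampleMDProb ε t o ≤ exp ε / (2 * (exp ε + 1)) := by
  have he : 1 < exp ε := by
    have := exp_lt_exp.mpr hε; simpa using this
  have hpos : (0:ℝ) < exp ε + 1 := by linarith
  have hpos' : (0:ℝ) < 1 + exp ε := by linarith
  obtain ⟨s, b⟩ := o
  cases t with
  | none =>
    simp only [biSampleMDProb]
    cases b <;> cases s <;> simp only [if_true, if_false, Bool.false_eq_true, cond_false] <;>
      constructor <;>
      · field_simp
        all_goals nlinarith
  | some v =>
    have hv := ht v rfl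
    obtain ⟨hv1, hv2⟩ := hv
    simp only [biSampleMDProb]
    cases b <;> cases s <;> simp only [if_true, if_false, Bool.false_eq_true, cond_false] <;>
      constructor <;>
      · field_simp
        all_goals nlinarith [mul_nonneg (mul_nonneg (sub_nonneg.2 he.le)
            (by linarith : (0:ℝ) ≤ 1 + v)) hpos.le,
          mul_nonneg (mul_nonneg (sub_nonneg.2 he.le)
            (by linarith : (0:ℝ) ≤ 1 - v)) hpos.le]

/-- The BiSample-MD mechanism satisfies ε-local differential privacy on
`[−1,1] ∪ {⊥}`. -/
theorem biSampleMD_ldp (ε : ℝ) (hε : 0 < ε) (t1 t2 : Option ℝ)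
    (ht1 : ∀ v ∈ t1, v ∈ Set.Icc (-1 : ℝ) 1)
    (ht2 : ∀ v ∈ t2, v ∈ Set.Icc (-1 : ℝ) 1)
    (o : Bool × Bool) :
    biSampleMDProb ε t1 o ≤ exp ε * biSampleMDProb ε t2 o := by
  obtain ⟨h1l, h1u⟩ := biSampleMD_bounds ε hε t1 ht1 o
  obtain ⟨h2l, h2u⟩ := biSampleMD_bounds ε hε t2 ht2 o
  have he : (0:ℝ) < exp ε := exp_pos ε
  calc biSampleMDProb ε t1 o ≤ exp ε / (2 * (exp ε + 1)) := h1u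
    _ = exp ε * (1 / (2 * (exp ε + 1))) := by ring
    _ ≤ exp ε * biSampleMDProb ε t2 o := by
        exact mul_le_mul_of_nonneg_left h2l he.le
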